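/- For α ∈ (0, 1/2) and 0 ≤ r < s, the integral ∫₀^s |r - τ|^(-α) (s - τ)^(-α) dτ is at most C · (s - r)^(1-2α) + (1/(1-2α)) · s^(1-2α), where C = π + 2/(1-2α). -/

import Mathlib

open MeasureTheory Real Set

private lemma aux_int_left {p : ℝ} (hp : -1 < p) (c a b : ℝ) :
    IntervalIntegrable (fun τ => (c - τ) ^ p) volume a b := by
  simpa using (intervalIntegral.intervalIntegrable_rpow' hp
    (a := c - a) (b := c - b)).comp_sub_left c

private lemma aux_int_right {p : ℝ} (hp : -1 < p) (c a b : ℝ) :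
    IntervalIntegrable (fun τ => (τ - c) ^ p) volume a b := by
  simpa using (intervalIntegral.intervalIntegrable_rpow' hp
    (a := a - c) (b := b - c)).comp_sub_right c

theorem stmt_0 (α r s : ℝ) (hα : α ∈ Set.Ioo (0:ℝ) (1/2))
    (hr : 0 ≤ r) (hrs : r < s) :
    ∫ τ in (0:ℝ)..s, |r - τ| ^ (-α) * (s - τ) ^ (-α) ≤
      (Real.pi + 2 / (1 - 2*α)) * (s - r) ^ (1 - 2*α)
        + (1 / (1 - 2*α)) * s ^ (1 - 2*α) := by
  obtain ⟨hα0, hα2⟩ := hα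
  have hα1 : (-1:ℝ) < -α := by linarith
  have hα1' : (-1:ℝ) < -(2*α) := by linarith
  have he : (0:ℝ) < 1 - 2*α := by linarith
  have h1a : (0:ℝ) < 1 - α := by linarith
  set f : ℝ → ℝ := fun τ => |r - τ| ^ (-α) * (s - τ) ^ (-α) with hf
  set m : ℝ := (r + s) / 2 with hm
  have hrm : r ≤ m := by rw [hm]; linarith
  have hms : m ≤ s := by rw [hm]; linarith
  have hh : 0 < s - m := by rw [hm]; linarith
  have hmr : m - r = s - m := by rw [hm]; ring
  -- measurability
  have hmeas : ∀ a b : ℝ, AEStronglyMeasurable f (volume.restrict (Set.uIoc a b)) := by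
    intro a b
    apply Measurable.aestronglyMeasurable
    fun_prop
  -- pointwise bounds
  have key1 : ∀ τ ∈ Icc (0:ℝ) r, f τ ≤ (r - τ) ^ (-(2*α)) := by
    intro τ hτ
    have hτr : τ ≤ r := hτ.2
    have habs : |r - τ| = r - τ := abs_of_nonneg (by linarith)
    rcases eq_or_lt_of_le hτr with h | h
    · subst h
      simp [hf, Real.zero_rpow (by linarith : -α ≠ 0),
        Real.zero_rpow (by linarith : -(2*α) ≠ 0)]
    · have hpos : 0 < r - τ := by linarith
      have h2 : (s - τ) ^ (-α) ≤ (r - τ) ^ (-α) :=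
        Real.rpow_le_rpow_of_nonpos hpos (by linarith) (by linarith)
      have h3 : (r - τ) ^ (-α) * (r - τ) ^ (-α) = (r - τ) ^ (-(2*α)) := by
        rw [← Real.rpow_add hpos]; ring_nf
      calc f τ = (r - τ) ^ (-α) * (s - τ) ^ (-α) := by simp only [hf, habs]
        _ ≤ (r - τ) ^ (-α) * (r - τ) ^ (-α) :=
            mul_le_mul_of_nonneg_left h2 (Real.rpow_nonneg hpos.le _)
        _ = (r - τ) ^ (-(2*α)) := h3
  have key2 : ∀ τ ∈ Icc r m, f τ ≤ (s - m) ^ (-α) * (τ - r) ^ (-α) := by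
    intro τ hτ
    have habs : |r - τ| = τ - r := by rw [abs_sub_comm]; exact abs_of_nonneg (by linarith [hτ.1])
    have h2 : (s - τ) ^ (-α) ≤ (s - m) ^ (-α) :=
      Real.rpow_le_rpow_of_nonpos hh (by linarith [hτ.2]) (by linarith)
    calc f τ = (τ - r) ^ (-α) * (s - τ) ^ (-α) := by simp only [hf, habs]
      _ ≤ (τ - r) ^ (-α) * (s - m) ^ (-α) :=
          mul_le_mul_of_nonneg_left h2 (Real.rpow_nonneg (by linarith [hτ.1]) _)
      _ = (s - m) ^ (-α) * (τ - r) ^ (-α) := mul_comm _ _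
  have key3 : ∀ τ ∈ Icc m s, f τ ≤ (s - m) ^ (-α) * (s - τ) ^ (-α) := by
    intro τ hτ
    have habs : |r - τ| = τ - r := by
      rw [abs_sub_comm]; exact abs_of_nonneg (by linarith [hτ.1])
    have h2 : (τ - r) ^ (-α) ≤ (s - m) ^ (-α) :=
      Real.rpow_le_rpow_of_nonpos hh (by linarith [hτ.1, hmr]) (by linarith)
    calc f τ = (τ - r) ^ (-α) * (s - τ) ^ (-α) := by simp only [hf, habs]
      _ ≤ (s - m) ^ (-α) * (s - τ) ^ (-α) :=
          mul_le_mul_of_nonneg_right h2 (Real.rpow_nonneg (by linarith [hτ.2]) _)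
  -- nonnegativity of f
  have hfnn : ∀ τ, τ ≤ s → 0 ≤ f τ := fun τ h =>
    mul_nonneg (Real.rpow_nonneg (abs_nonneg _) _) (Real.rpow_nonneg (by linarith) _)
  -- integrability of the dominating functions
  have hg1 : IntervalIntegrable (fun τ => (r - τ) ^ (-(2*α))) volume 0 r :=
    aux_int_left hα1' r 0 r
  have hg2 : IntervalIntegrable (fun τ => (s - m) ^ (-α) * (τ - r) ^ (-α)) volume r m :=
    (aux_int_right hα1 r r m).const_mul _
  have hg3 : IntervalIntegrable (fun τ => (s - m) ^ (-α) * (s - τ) ^ (-α)) volume m s :=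
    (aux_int_left hα1 s m s).const_mul _
  -- integrability of f on the three pieces
  have hae : ∀ (a b : ℝ) (g : ℝ → ℝ), a ≤ b → b ≤ s → (∀ τ ∈ Icc a b, f τ ≤ g τ) →
      (fun τ => ‖f τ‖) ≤ᵐ[volume.restrict (Set.uIoc a b)] g := by
    intro a b g hab hbs hle
    filter_upwards [ae_restrict_mem measurableSet_uIoc] with τ hτ
    rw [uIoc_of_le hab] at hτ
    have hτ' : τ ∈ Icc a b := Ioc_subset_Icc_self hτ
    rw [Real.norm_eq_abs, abs_of_nonneg (hfnn τ (hτ'.2.trans hbs))]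
    exact hle τ hτ'
  have hf1 : IntervalIntegrable f volume 0 r :=
    hg1.mono_fun' (hmeas 0 r) (hae 0 r _ hr hrs.le key1)
  have hf2 : IntervalIntegrable f volume r m :=
    hg2.mono_fun' (hmeas r m) (hae r m _ hrm hms key2)
  have hf3 : IntervalIntegrable f volume m s :=
    hg3.mono_fun' (hmeas m s) (hae m s _ hms le_rfl key3)
  -- split the integral
  have hsplit : (∫ τ in (0:ℝ)..s, f τ)
      = (∫ τ in (0:ℝ)..r, f τ) + ((∫ τ in r..m, f τ) + ∫ τ in m..s, f τ) := by
    rw [intervalIntegral.integral_add_adjacent_intervals hf2 hf3,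
      intervalIntegral.integral_add_adjacent_intervals hf1 (hf2.trans hf3)]
  -- compute the integrals of the dominating functions
  have C1 : (∫ τ in (0:ℝ)..r, (r - τ) ^ (-(2*α))) = r ^ (1 - 2*α) / (1 - 2*α) := by
    rw [intervalIntegral.integral_comp_sub_left (fun x => x ^ (-(2*α))) r]
    simp only [sub_self, sub_zero]
    rw [integral_rpow (Or.inl hα1'), Real.zero_rpow (by linarith : -(2*α) + 1 ≠ 0),
      sub_zero, (by ring : -(2*α) + 1 = 1 - 2*α)]
  have C2 : (∫ τ in r..m, (τ - r) ^ (-α)) = (s - m) ^ (1 - α) / (1 - α) := by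
    rw [intervalIntegral.integral_comp_sub_right (fun x => x ^ (-α)) r]
    simp only [sub_self, hmr]
    rw [integral_rpow (Or.inl hα1), Real.zero_rpow (by linarith : -α + 1 ≠ 0),
      sub_zero, (by ring : -α + 1 = 1 - α)]
  have C3 : (∫ τ in m..s, (s - τ) ^ (-α)) = (s - m) ^ (1 - α) / (1 - α) := by
    rw [intervalIntegral.integral_comp_sub_left (fun x => x ^ (-α)) s]
    simp only [sub_self]
    rw [integral_rpow (Or.inl hα1), Real.zero_rpow (by linarith : -α + 1 ≠ 0),
      sub_zero, (by ring : -α + 1 = 1 - α)]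
  -- bound each piece
  have hpow : (s - m) ^ (-α) * ((s - m) ^ (1 - α) / (1 - α))
      = (s - m) ^ (1 - 2*α) / (1 - α) := by
    rw [mul_div_assoc', ← Real.rpow_add hh, (by ring : -α + (1 - α) = 1 - 2*α)]
  have I1 : (∫ τ in (0:ℝ)..r, f τ) ≤ r ^ (1 - 2*α) / (1 - 2*α) := by
    rw [← C1]; exact intervalIntegral.integral_mono_on hr hf1 hg1 key1
  have I2 : (∫ τ in r..m, f τ) ≤ (s - m) ^ (1 - 2*α) / (1 - α) := by
    calc (∫ τ in r..m, f τ) ≤ ∫ τ in r..m, (s - m) ^ (-α) * (τ - r) ^ (-α) :=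
          intervalIntegral.integral_mono_on hrm hf2 hg2 key2
      _ = (s - m) ^ (-α) * ∫ τ in r..m, (τ - r) ^ (-α) :=
          intervalIntegral.integral_const_mul _ _
      _ = (s - m) ^ (1 - 2*α) / (1 - α) := by rw [C2, hpow]
  have I3 : (∫ τ in m..s, f τ) ≤ (s - m) ^ (1 - 2*α) / (1 - α) := by
    calc (∫ τ in m..s, f τ) ≤ ∫ τ in m..s, (s - m) ^ (-α) * (s - τ) ^ (-α) :=
          intervalIntegral.integral_mono_on hms hf3 hg3 key3
      _ = (s - m) ^ (-α) * ∫ τ in m..s, (s - τ) ^ (-α) :=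
          intervalIntegral.integral_const_mul _ _
      _ = (s - m) ^ (1 - 2*α) / (1 - α) := by rw [C3, hpow]
  -- final arithmetic
  have hA : (0:ℝ) ≤ (s - m) ^ (1 - 2*α) := Real.rpow_nonneg hh.le _
  have hB : (0:ℝ) ≤ (s - r) ^ (1 - 2*α) := Real.rpow_nonneg (by linarith) _
  have hAB : (s - m) ^ (1 - 2*α) ≤ (s - r) ^ (1 - 2*α) :=
    Real.rpow_le_rpow hh.le (by linarith) he.le
  have hrs' : r ^ (1 - 2*α) ≤ s ^ (1 - 2*α) :=
    Real.rpow_le_rpow hr (by linarith) he.le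
  have h1 : r ^ (1 - 2*α) / (1 - 2*α) ≤ 1 / (1 - 2*α) * s ^ (1 - 2*α) := by
    rw [one_div, inv_mul_eq_div]
    exact (div_le_div_iff_of_pos_right he).mpr hrs'
  have t1 : (s - m) ^ (1 - 2*α) / (1 - α) ≤ (s - r) ^ (1 - 2*α) / (1 - 2*α) :=
    div_le_div₀ hB hAB he (by linarith)
  have hπB : (0:ℝ) ≤ Real.pi * (s - r) ^ (1 - 2*α) := mul_nonneg Real.pi_pos.le hB
  have expand : (Real.pi + 2 / (1 - 2*α)) * (s - r) ^ (1 - 2*α)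
      = Real.pi * (s - r) ^ (1 - 2*α) + 2 * ((s - r) ^ (1 - 2*α) / (1 - 2*α)) := by
    ring
  have h2 : (s - m) ^ (1 - 2*α) / (1 - α) + (s - m) ^ (1 - 2*α) / (1 - α)
      ≤ (Real.pi + 2 / (1 - 2*α)) * (s - r) ^ (1 - 2*α) := by
    rw [expand]; linarith
  rw [hsplit]
  linarith
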